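/- Let t ≥ 2 and s ≥ 1 be integers and let H be a t-uniform hypergraph on the vertex set {1,2,...,n} with the following property: there do not exist pairwise disjoint sets V₁, V₂, ..., V_t ⊆ {1,...,n}, each of size s, with every element of V_i smaller than every element of V_j whenever i < j, such that every transversal set {v₁,...,v_t} with v_i ∈ V_i for each i is a hyperedge of H. Then H has at most 2·n^{t-δ} hyperedges, where δ = 1/(t·s^{t-1}). -/

import Mathlib

open Finset

/-- `M` contains `A`: strictly increasing row and column injections preserving 1-entries. -/
def Contains {r s m n : ℕ} (A : Fin r → Fin s → Bool) (M : Fin m → Fin n → Bool) : Prop :=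
  ∃ (φ : Fin r → Fin m) (ψ : Fin s → Fin n),
    StrictMono φ ∧ StrictMono ψ ∧ ∀ i j, A i j = true → M (φ i) (ψ j) = true

/-- The weight of a zero-one matrix: the number of its 1-entries. -/
def weight {m n : ℕ} (M : Fin m → Fin n → Bool) : ℕ :=
  (univ.filter fun p : Fin m × Fin n => M p.1 p.2 = true).card

/-- `matEx n A`: the maximum weight of an `n × n` zero-one matrix not containing `A`. -/
noncomputable def matEx {r s : ℕ} (n : ℕ) (A : Fin r → Fin s → Bool) : ℕ :=
  sSup {w : ℕ | ∃ M : Fin n → Fin n → Bool, ¬ Contains A M ∧ weight M = w}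

/-- `A` is column-`t`-partite: the columns can be partitioned into `t` intervals so that
every row of each resulting submatrix has at most one 1-entry. -/
def ColumnPartite {r s : ℕ} (t : ℕ) (A : Fin r → Fin s → Bool) : Prop :=
  ∃ f : Fin s → Fin t, Monotone f ∧
    ∀ (i : Fin r) (p : Fin t), (univ.filter fun j => f j = p ∧ A i j = true).card ≤ 1

/-- `A` is row-`t`-partite. -/
def RowPartite {r s : ℕ} (t : ℕ) (A : Fin r → Fin s → Bool) : Prop :=
  ∃ f : Fin r → Fin t, Monotone f ∧
    ∀ (j : Fin s) (p : Fin t), (univ.filter fun i => f i = p ∧ A i j = true).card ≤ 1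

/-- The number of copies of `K_{u,t}` in `M`: pairs of a `u`-set of rows and a `t`-set of
columns all of whose intersections are 1-entries. -/
def numCopies {m n : ℕ} (u t : ℕ) (M : Fin m → Fin n → Bool) : ℕ :=
  (((univ : Finset (Fin m)).powersetCard u ×ˢ (univ : Finset (Fin n)).powersetCard t).filter
    fun p => ∀ i ∈ p.1, ∀ j ∈ p.2, M i j = true).card

theorem block_index_lt {m k : ℕ} (hk : k ∣ m) (p : Fin k) (i : Fin (m / k)) :
    (p : ℕ) * (m / k) + (i : ℕ) < m :=
  calc (p : ℕ) * (m / k) + (i : ℕ) < ((p : ℕ) + 1) * (m / k) := by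
        rw [add_mul, one_mul]; exact Nat.add_lt_add_left i.2 _
    _ ≤ k * (m / k) := Nat.mul_le_mul_right _ p.2
    _ = m := Nat.mul_div_cancel' hk

/-- The `p`-th horizontal block of `M` (blocks of consecutive rows of height `m / k`). -/
def horizontalBlock {m n : ℕ} (k : ℕ) (hk : k ∣ m) (p : Fin k) (M : Fin m → Fin n → Bool) :
    Fin (m / k) → Fin n → Bool :=
  fun i j => M ⟨(p : ℕ) * (m / k) + (i : ℕ), block_index_lt hk p i⟩ j

/-- The `(p,q)` block of an `n × n` matrix: intersection of the `p`-th horizontal block and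
the `q`-th vertical block. -/
def matBlock {n : ℕ} (k : ℕ) (hk : k ∣ n) (p q : Fin k) (M : Fin n → Fin n → Bool) :
    Fin (n / k) → Fin (n / k) → Bool :=
  fun i j => M ⟨(p : ℕ) * (n / k) + (i : ℕ), block_index_lt hk p i⟩
               ⟨(q : ℕ) * (n / k) + (j : ℕ), block_index_lt hk q j⟩

/-- An `n × m` matrix is `r`-balanced: `r ∣ n` and in every column, the `r` consecutive
row-intervals of length `n / r` contain equally many 1-entries. -/
def RBalanced {n m : ℕ} (r : ℕ) (M : Fin n → Fin m → Bool) : Prop :=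
  r ∣ n ∧ ∀ (c : Fin m) (i₁ i₂ : Fin r),
    (univ.filter fun a : Fin n =>
      (i₁ : ℕ) * (n / r) ≤ (a : ℕ) ∧ (a : ℕ) < ((i₁ : ℕ) + 1) * (n / r) ∧ M a c = true).card =
    (univ.filter fun a : Fin n =>
      (i₂ : ℕ) * (n / r) ≤ (a : ℕ) ∧ (a : ℕ) < ((i₂ : ℕ) + 1) * (n / r) ∧ M a c = true).card

/-- The bipartite graph of a zero-one matrix: rows and columns are vertices, 1-entries edges. -/
def cycleGraph {r s : ℕ} (A : Fin r → Fin s → Bool) : SimpleGraph (Fin r ⊕ Fin s) where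
  Adj x y :=
    (∃ i j, x = Sum.inl i ∧ y = Sum.inr j ∧ A i j = true) ∨
    (∃ i j, x = Sum.inr j ∧ y = Sum.inl i ∧ A i j = true)
  symm := by
    constructor
    intro x y h
    rcases h with ⟨i, j, hx, hy, hA⟩ | ⟨i, j, hx, hy, hA⟩
    · exact Or.inr ⟨i, j, hy, hx, hA⟩
    · exact Or.inl ⟨i, j, hy, hx, hA⟩
  loopless := by
    constructor
    intro x h
    rcases h with ⟨i, j, hx, hy, _⟩ | ⟨i, j, hx, hy, _⟩ <;> subst hx <;> simp_all

/-- `A` is a cycle: every row and column has 0 or 2 one-entries, and the edges of the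
associated bipartite graph form a single connected cycle (the graph induced on the
support of `cycleGraph A` is connected). -/
def IsCycleMatrix {r s : ℕ} (A : Fin r → Fin s → Bool) : Prop :=
  (∀ i : Fin r, (univ.filter fun j => A i j = true).card = 0 ∨
      (univ.filter fun j => A i j = true).card = 2) ∧
  (∀ j : Fin s, (univ.filter fun i => A i j = true).card = 0 ∨
      (univ.filter fun i => A i j = true).card = 2) ∧
  ((cycleGraph A).induce (cycleGraph A).support).Connected

/-- A cycle is x-monotone: every vertical line crosses at most two rows, i.e. for every `j`,
at most two rows have 1-entries in columns `c₁ ≤ j < c₂`. -/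
def XMonotone {r s : ℕ} (A : Fin r → Fin s → Bool) : Prop :=
  ∀ j : ℕ, (univ.filter fun i : Fin r =>
    ∃ c₁ c₂ : Fin s, A i c₁ = true ∧ A i c₂ = true ∧ (c₁ : ℕ) ≤ j ∧ j < (c₂ : ℕ)).card ≤ 2


def HasBox {n : ℕ} (s r : ℕ) (L : Finset (Finset (Fin n))) : Prop :=
  ∃ V : Fin r → Finset (Fin n),
    (∀ i, (V i).card = s) ∧
    (∀ i j : Fin r, i ≠ j → Disjoint (V i) (V j)) ∧
    (∀ i j : Fin r, i < j → ∀ x ∈ V i, ∀ y ∈ V j, x < y) ∧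
    (∀ v : Fin r → Fin n, (∀ i, v i ∈ V i) → Finset.image v Finset.univ ∈ L)

lemma level1 {n s : ℕ} (L : Finset (Finset (Fin n)))
    (hu : ∀ e ∈ L, e.card = 1) (hb : ¬ HasBox s 1 L) : L.card ≤ s := by
  by_contra hcard
  push_neg at hcard
  set W : Finset (Fin n) := L.biUnion id with hW
  have hsing : ∀ x ∈ W, ({x} : Finset (Fin n)) ∈ L := by
    intro x hx
    rw [hW, mem_biUnion] at hx
    obtain ⟨e, he, hxe⟩ := hx
    obtain ⟨y, hy⟩ := Finset.card_eq_one.mp (hu e he)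
    subst hy
    simp only [id_eq, mem_singleton] at hxe
    subst hxe; exact he
  have hLW : L ⊆ W.image (fun x => ({x} : Finset (Fin n))) := by
    intro e he
    obtain ⟨y, hy⟩ := Finset.card_eq_one.mp (hu e he)
    refine mem_image.mpr ⟨y, ?_, hy.symm⟩
    rw [hW, mem_biUnion]; exact ⟨e, he, by simp [hy]⟩
  have hsW : s < W.card :=
    lt_of_lt_of_le hcard ((card_le_card hLW).trans (card_image_le))
  obtain ⟨V₀, hV₀W, hV₀⟩ := Finset.exists_subset_card_eq hsW.le
  apply hb
  refine ⟨fun _ => V₀, fun _ => hV₀, ?_, ?_, ?_⟩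
  · intro i j hij; exact absurd (Subsingleton.elim i j) hij
  · intro i j hij; exact absurd (Subsingleton.elim i j) hij.ne
  · intro v hv
    have : Finset.image v Finset.univ = {v 0} := by
      ext x; simp [Fin.forall_fin_one, Fin.exists_fin_one]
    rw [this]
    exact hsing _ (hV₀W (hv 0))

variable {n : ℕ}

/-- vertices extending `T` from above into an edge of `H`. -/
def extSet (H : Finset (Finset (Fin n))) (T : Finset (Fin n)) : Finset (Fin n) :=
  univ.filter (fun v => (∀ u ∈ T, u < v) ∧ insert v T ∈ H)

/-- the link hypergraph of an `s`-set `S`. -/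
def linkF (H : Finset (Finset (Fin n))) (r : ℕ) (S : Finset (Fin n)) :
    Finset (Finset (Fin n)) :=
  (powersetCard r univ).filter (fun T => S ⊆ extSet H T)

lemma linkF_unif (H : Finset (Finset (Fin n))) (r : ℕ) (S : Finset (Fin n)) :
    ∀ T ∈ linkF H r S, T.card = r := by
  intro T hT
  exact (Finset.mem_powersetCard.mp (Finset.mem_filter.mp hT).1).2

lemma link_boxfree {s r : ℕ} (hs : 1 ≤ s) (H : Finset (Finset (Fin n)))
    (S : Finset (Fin n)) (hS : S.card = s) (hb : ¬ HasBox s (r+1) H) :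
    ¬ HasBox s r (linkF H r S) := by
  rintro ⟨V, hVcard, hVdisj, hVord, hVtr⟩
  have hVne : ∀ i, (V i).Nonempty := fun i =>
    Finset.card_pos.mp (by rw [hVcard i]; omega)
  set w : Fin r → Fin n := fun i => (hVne i).choose with hw
  have hwV : ∀ i, w i ∈ V i := fun i => (hVne i).choose_spec
  -- every element of every part is below every element of S
  have aux : ∀ (i : Fin r) (x : Fin n), x ∈ V i → ∀ y ∈ S, x < y := by
    intro i x hx y hy
    set w' : Fin r → Fin n := Function.update w i x with hw'
    have hw'V : ∀ j, w' j ∈ V j := by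
      intro j
      rcases eq_or_ne j i with rfl | hne
      · simpa [hw'] using hx
      · simpa [hw', Function.update_of_ne hne] using hwV j
    have hT : Finset.image w' Finset.univ ∈ linkF H r S := hVtr w' hw'V
    have hsub : S ⊆ extSet H (Finset.image w' Finset.univ) :=
      (Finset.mem_filter.mp hT).2
    have hy' := Finset.mem_filter.mp (hsub hy)
    refine hy'.2.1 x ?_
    exact Finset.mem_image.mpr ⟨i, Finset.mem_univ i, by simp [hw']⟩
  have hdisjS : ∀ i, Disjoint (V i) S := by
    intro i
    rw [Finset.disjoint_left]
    intro x hx hxS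
    exact absurd (aux i x hx x hxS) (lt_irrefl x)
  apply hb
  refine ⟨Fin.snoc V S, ?_, ?_, ?_, ?_⟩
  · intro i
    rcases Fin.eq_castSucc_or_eq_last i with ⟨j, rfl⟩ | rfl
    · simpa using hVcard j
    · simpa using hS
  · intro i j hij
    rcases Fin.eq_castSucc_or_eq_last i with ⟨i', rfl⟩ | rfl <;>
      rcases Fin.eq_castSucc_or_eq_last j with ⟨j', rfl⟩ | rfl
    · simpa using hVdisj i' j' (by simpa using hij)
    · simpa using hdisjS i'
    · simpa using (hdisjS j').symm
    · exact absurd rfl hij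
  · intro i j hij x hx y hy
    rcases Fin.eq_castSucc_or_eq_last j with ⟨j', rfl⟩ | rfl
    · have hij' : i < Fin.last r := lt_trans hij (Fin.castSucc_lt_last j')
      rcases Fin.eq_castSucc_or_eq_last i with ⟨i', rfl⟩ | rfl
      · exact hVord i' j' (by simpa using hij) x (by simpa using hx) y (by simpa using hy)
      · exact absurd rfl (ne_of_lt hij')
    · rcases Fin.eq_castSucc_or_eq_last i with ⟨i', rfl⟩ | rfl
      · exact aux i' x (by simpa using hx) y (by simpa using hy)
      · exact absurd hij (lt_irrefl _)
  · intro v hv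
    set w' : Fin r → Fin n := v ∘ Fin.castSucc with hw'
    have hw'V : ∀ i, w' i ∈ V i := by
      intro i; simpa [hw'] using hv i.castSucc
    have hT : Finset.image w' Finset.univ ∈ linkF H r S := hVtr w' hw'V
    have hsub : S ⊆ extSet H (Finset.image w' Finset.univ) :=
      (Finset.mem_filter.mp hT).2
    have hlast : v (Fin.last r) ∈ S := by simpa using hv (Fin.last r)
    have hmem := Finset.mem_filter.mp (hsub hlast)
    have himg : Finset.image v Finset.univ
        = insert (v (Fin.last r)) (Finset.image w' Finset.univ) := by
      ext x
      simp only [Finset.mem_image, Finset.mem_insert, Finset.mem_univ, true_and, hw',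
        Function.comp_apply]
      constructor
      · rintro ⟨i, rfl⟩
        rcases Fin.eq_castSucc_or_eq_last i with ⟨i', rfl⟩ | rfl
        · exact Or.inr ⟨i', rfl⟩
        · exact Or.inl rfl
      · rintro (rfl | ⟨i', rfl⟩)
        · exact ⟨Fin.last r, rfl⟩
        · exact ⟨i'.castSucc, rfl⟩
    rw [himg]
    exact hmem.2.2

lemma card_decomp {r : ℕ} (H : Finset (Finset (Fin n))) (hu : ∀ e ∈ H, e.card = r + 1) :
    H.card = ∑ T ∈ powersetCard r (univ : Finset (Fin n)), (extSet H T).card := by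
  classical
  rw [← Finset.card_sigma]
  symm
  apply Finset.card_bij (fun a _ => insert a.2 a.1)
  · rintro ⟨T, v⟩ ha
    rw [Finset.mem_sigma] at ha
    exact ((Finset.mem_filter.mp ha.2).2).2
  · rintro ⟨T, v⟩ ha ⟨T', v'⟩ ha' heq
    rw [Finset.mem_sigma] at ha ha'
    have hvT : ∀ u ∈ T, u < v := ((Finset.mem_filter.mp ha.2).2).1
    have hvT' : ∀ u ∈ T', u < v' := ((Finset.mem_filter.mp ha'.2).2).1
    have hvv : v = v' := by
      have h1 : v ∈ insert v' T' := by rw [← heq]; exact Finset.mem_insert_self _ _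
      have h2 : v' ∈ insert v T := by rw [heq]; exact Finset.mem_insert_self _ _
      rcases Finset.mem_insert.mp h1 with h | h
      · exact h
      · rcases Finset.mem_insert.mp h2 with h' | h'
        · exact h'.symm
        · exact absurd (lt_trans (hvT' v h) (hvT v' h')) (lt_irrefl v)
    subst hvv
    have hvnT : v ∉ T := fun h => absurd (hvT v h) (lt_irrefl v)
    have hvnT' : v ∉ T' := fun h => absurd (hvT' v h) (lt_irrefl v)
    have : T = T' := by
      rw [← Finset.erase_insert hvnT, ← Finset.erase_insert hvnT', heq]
    simp [this]
  · intro e he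
    have hne : e.Nonempty := Finset.card_pos.mp (by rw [hu e he]; omega)
    set M := e.max' hne with hM
    refine ⟨⟨e.erase M, M⟩, ?_, ?_⟩
    · rw [Finset.mem_sigma]
      constructor
      · rw [Finset.mem_powersetCard]
        refine ⟨Finset.subset_univ _, ?_⟩
        rw [Finset.card_erase_of_mem (e.max'_mem hne), hu e he]
        omega
      · simp only [extSet, Finset.mem_filter]
        have hins : insert M (e.erase M) = e := Finset.insert_erase (e.max'_mem hne)
        refine ⟨Finset.mem_univ _, ?_, by rw [hins]; exact he⟩
        intro u hu'
        have := Finset.mem_erase.mp hu'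
        exact lt_of_le_of_ne (e.le_max' u this.2) this.1
    · exact Finset.insert_erase (e.max'_mem hne)

lemma double_cnt {r s : ℕ} (H : Finset (Finset (Fin n))) :
    ∑ T ∈ powersetCard r (univ : Finset (Fin n)), ((extSet H T).card).choose s
      = ∑ S ∈ powersetCard s (univ : Finset (Fin n)), (linkF H r S).card := by
  classical
  have h1 : ∀ T : Finset (Fin n), ((extSet H T).card).choose s
      = ((powersetCard s (univ : Finset (Fin n))).filter (fun S => S ⊆ extSet H T)).card := by
    intro T
    rw [← Finset.card_powersetCard]
    congr 1
    ext S
    simp only [Finset.mem_powersetCard, Finset.mem_filter, Finset.subset_univ, true_and]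
    tauto
  simp_rw [h1, Finset.card_filter, linkF]
  rw [Finset.sum_comm]
  exact Finset.sum_congr rfl fun S _ => (Finset.card_filter _ _).symm

lemma step_count {r s : ℕ} (hs : 1 ≤ s) (H : Finset (Finset (Fin n)))
    (hu : ∀ e ∈ H, e.card = r + 1) (F : ℝ) (hF : 0 ≤ F)
    (hlink : ∀ S ∈ powersetCard s (univ : Finset (Fin n)), ((linkF H r S).card : ℝ) ≤ F)
    (Y : ℝ) (hY : 0 ≤ Y)
    (hYs : ((n.choose r : ℝ)) ^ (s - 1) * 2 ^ s * (n : ℝ) ^ s * F ≤ Y ^ s) :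
    (H.card : ℝ) ≤ 2 * s * (n.choose r) + Y := by
  classical
  by_contra hcon
  push_neg at hcon
  set 𝒯 := powersetCard r (univ : Finset (Fin n)) with h𝒯
  have hNT : 𝒯.card = n.choose r := by
    rw [h𝒯, Finset.card_powersetCard, Finset.card_univ, Fintype.card_fin]
  set d : Finset (Fin n) → ℕ := fun T => (extSet H T).card with hd
  set 𝒯' := 𝒯.filter (fun T => 2 * s ≤ d T) with h𝒯'
  -- most edges live over big-degree stems
  have h1 : (H.card : ℝ) ≤ (∑ T ∈ 𝒯', (d T : ℝ)) + 2 * s * (n.choose r) := by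
    have hsplit : ∑ T ∈ 𝒯, d T = ∑ T ∈ 𝒯', d T + ∑ T ∈ 𝒯.filter (fun T => ¬ 2 * s ≤ d T), d T :=
      (Finset.sum_filter_add_sum_filter_not 𝒯 _ d).symm
    have hsmall : ∑ T ∈ 𝒯.filter (fun T => ¬ 2 * s ≤ d T), d T ≤ (n.choose r) * (2 * s) := by
      calc ∑ T ∈ 𝒯.filter (fun T => ¬ 2 * s ≤ d T), d T
          ≤ (𝒯.filter (fun T => ¬ 2 * s ≤ d T)).card * (2 * s) := by
            apply Finset.sum_le_card_nsmul
            intro T hT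
            have := (Finset.mem_filter.mp hT).2
            omega
        _ ≤ (n.choose r) * (2 * s) := by
            apply Nat.mul_le_mul_right
            rw [← hNT]
            exact Finset.card_le_card (Finset.filter_subset _ _)
    have hm : H.card = ∑ T ∈ 𝒯, d T := card_decomp H hu
    have hnat : H.card ≤ ∑ T ∈ 𝒯', d T + (n.choose r) * (2 * s) := by omega
    calc (H.card : ℝ) ≤ ((∑ T ∈ 𝒯', d T + (n.choose r) * (2 * s) : ℕ) : ℝ) := by
          exact_mod_cast hnat
      _ = (∑ T ∈ 𝒯', (d T : ℝ)) + 2 * s * (n.choose r) := by push_cast; ring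
  have hX : Y < ∑ T ∈ 𝒯', (d T : ℝ) := by linarith
  have hXnn : (0:ℝ) ≤ ∑ T ∈ 𝒯', (d T : ℝ) :=
    Finset.sum_nonneg fun T _ => Nat.cast_nonneg _
  -- power mean
  obtain ⟨s', rfl⟩ : ∃ s', s = s' + 1 := ⟨s - 1, by omega⟩
  have h2 : (∑ T ∈ 𝒯', (d T : ℝ)) ^ (s' + 1)
      ≤ ((n.choose r : ℝ)) ^ s' * ∑ T ∈ 𝒯', (d T : ℝ) ^ (s' + 1) := by
    calc (∑ T ∈ 𝒯', (d T : ℝ)) ^ (s' + 1)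
        ≤ ((𝒯'.card : ℝ)) ^ s' * ∑ T ∈ 𝒯', (d T : ℝ) ^ (s' + 1) :=
          pow_sum_le_card_mul_sum_pow (fun T _ => Nat.cast_nonneg _) s'
      _ ≤ ((n.choose r : ℝ)) ^ s' * ∑ T ∈ 𝒯', (d T : ℝ) ^ (s' + 1) := by
          apply mul_le_mul_of_nonneg_right
          · apply pow_le_pow_left₀ (Nat.cast_nonneg _)
            exact_mod_cast (hNT ▸ Finset.card_le_card (Finset.filter_subset _ _))
          · exact Finset.sum_nonneg fun T _ => pow_nonneg (Nat.cast_nonneg _) _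
  set s : ℕ := s' + 1 with hs'
  have hs1 : 1 ≤ s := by omega
  -- degree powers vs binomials
  have h3 : ∑ T ∈ 𝒯', (d T : ℝ) ^ s ≤ 2 ^ s * (s.factorial : ℝ) * ∑ T ∈ 𝒯', ((d T).choose s : ℝ) := by
    rw [Finset.mul_sum]
    apply Finset.sum_le_sum
    intro T hT
    have hdT : 2 * s ≤ d T := (Finset.mem_filter.mp hT).2
    have hnat : (d T) ^ s ≤ 2 ^ s * s.factorial * (d T).choose s := by
      calc (d T) ^ s ≤ (2 * (d T + 1 - s)) ^ s := Nat.pow_le_pow_left (by omega) s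
        _ = 2 ^ s * (d T + 1 - s) ^ s := mul_pow 2 _ s
        _ ≤ 2 ^ s * (d T).descFactorial s :=
            Nat.mul_le_mul_left _ (Nat.pow_sub_le_descFactorial _ _)
        _ = 2 ^ s * s.factorial * (d T).choose s := by
            rw [Nat.descFactorial_eq_factorial_mul_choose]; ring
    exact_mod_cast hnat
  -- double counting
  have h4 : ∑ T ∈ 𝒯', ((d T).choose s : ℝ)
      ≤ ∑ S ∈ powersetCard s (univ : Finset (Fin n)), ((linkF H r S).card : ℝ) := by
    have : ∑ T ∈ 𝒯', (d T).choose s ≤ ∑ T ∈ 𝒯, (d T).choose s :=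
      Finset.sum_le_sum_of_subset (Finset.filter_subset _ _)
    have := this.trans_eq (double_cnt H)
    exact_mod_cast this
  have h5 : ∑ S ∈ powersetCard s (univ : Finset (Fin n)), ((linkF H r S).card : ℝ)
      ≤ (n.choose s : ℝ) * F := by
    calc ∑ S ∈ powersetCard s (univ : Finset (Fin n)), ((linkF H r S).card : ℝ)
        ≤ ∑ S ∈ powersetCard s (univ : Finset (Fin n)), F :=
          Finset.sum_le_sum fun S hS => hlink S hS
      _ = (n.choose s : ℝ) * F := by
          rw [Finset.sum_const, Finset.card_powersetCard, Finset.card_univ, Fintype.card_fin,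
            nsmul_eq_mul]
  have hfacn : (s.factorial : ℝ) * (n.choose s : ℝ) ≤ (n : ℝ) ^ s := by
    have : s.factorial * n.choose s ≤ n ^ s := by
      rw [← Nat.descFactorial_eq_factorial_mul_choose]
      exact Nat.descFactorial_le_pow n s
    exact_mod_cast this
  -- combine
  have hcomb : (∑ T ∈ 𝒯', (d T : ℝ)) ^ s ≤ ((n.choose r : ℝ)) ^ (s - 1) * 2 ^ s * (n : ℝ) ^ s * F := by
    have e1 : (∑ T ∈ 𝒯', (d T : ℝ)) ^ s ≤ ((n.choose r : ℝ)) ^ s' * (2 ^ s * (s.factorial : ℝ) * ((n.choose s : ℝ) * F)) := by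
      refine h2.trans ?_
      apply mul_le_mul_of_nonneg_left _ (pow_nonneg (Nat.cast_nonneg _) _)
      exact h3.trans (by
        apply mul_le_mul_of_nonneg_left (h4.trans h5)
        positivity)
    refine e1.trans ?_
    have hss : s - 1 = s' := by omega
    rw [hss]
    have : (2:ℝ) ^ s * (s.factorial : ℝ) * ((n.choose s : ℝ) * F) ≤ 2 ^ s * ((n:ℝ) ^ s * F) := by
      rw [mul_assoc, ← mul_assoc (s.factorial : ℝ)]
      apply mul_le_mul_of_nonneg_left _ (by positivity)
      exact mul_le_mul_of_nonneg_right hfacn hF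
    calc ((n.choose r : ℝ)) ^ s' * ((2:ℝ) ^ s * (s.factorial : ℝ) * ((n.choose s : ℝ) * F))
        ≤ ((n.choose r : ℝ)) ^ s' * (2 ^ s * ((n:ℝ) ^ s * F)) :=
          mul_le_mul_of_nonneg_left this (pow_nonneg (Nat.cast_nonneg _) _)
      _ = ((n.choose r : ℝ)) ^ s' * 2 ^ s * (n : ℝ) ^ s * F := by ring
  have hYX : Y ^ s < (∑ T ∈ 𝒯', (d T : ℝ)) ^ s :=
    pow_lt_pow_left₀ hX hY (by omega)
  linarith [hYs, hcomb, hYX]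

lemma nat_2pow3pow {s : ℕ} (hs : 2 ≤ s) : 2 ^ (s + 1) ≤ 3 ^ s := by
  induction s, hs using Nat.le_induction with
  | base => norm_num
  | succ k hk ih =>
    calc 2 ^ (k+2) = 2 * 2 ^ (k+1) := by ring
      _ ≤ 3 * 3 ^ k := by omega
      _ = 3 ^ (k+1) := by ring

lemma nat_s2s3s {s : ℕ} (hs : 2 ≤ s) : s * 2 ^ s ≤ 3 ^ s := by
  induction s, hs using Nat.le_induction with
  | base => norm_num
  | succ k hk ih =>
    have h2 := nat_2pow3pow hk
    calc (k+1) * 2 ^ (k+1) = k * 2^k * 2 + 2 ^ (k+1) := by ring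
      _ ≤ 3 ^ k * 2 + 3 ^ k := by omega
      _ = 3 ^ (k+1) := by ring

lemma nat_le_two_pow_pred {s : ℕ} (hs : 1 ≤ s) : s ≤ 2 ^ (s - 1) := by
  induction s with
  | zero => omega
  | succ k ih =>
    rcases Nat.lt_or_ge k 1 with hk | hk
    · interval_cases k <;> norm_num
    · have := ih hk
      have hk1 : k + 1 - 1 = k := by omega
      rw [hk1]
      have : k - 1 + 1 = k := by omega
      calc k + 1 ≤ 2 ^ (k-1) + 2 ^ (k-1) := by omega
        _ = 2 ^ (k - 1 + 1) := by ring
        _ = 2 ^ k := by rw [this]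

lemma nat_two_pow_le_factorial (r : ℕ) : 2 ^ (r - 1) ≤ r.factorial := by
  induction r with
  | zero => norm_num
  | succ k ih =>
    rcases Nat.lt_or_ge k 1 with hk | hk
    · interval_cases k <;> norm_num [Nat.factorial]
    · have : k + 1 - 1 = k := by omega
      rw [this, Nat.factorial_succ]
      have : k - 1 + 1 = k := by omega
      calc 2 ^ k = 2 * 2 ^ (k-1) := by rw [← pow_succ']; rw [this]
        _ ≤ (k+1) * k.factorial := by
            have h2 : 2 ≤ k + 1 := by omega
            exact Nat.mul_le_mul h2 ih

lemma nat_choose_two_pow {n r : ℕ} : n.choose r * 2 ^ (r - 1) ≤ n ^ r :=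
  calc n.choose r * 2 ^ (r-1) ≤ n.choose r * r.factorial :=
        Nat.mul_le_mul_left _ (nat_two_pow_le_factorial r)
    _ = n.descFactorial r := by rw [Nat.descFactorial_eq_factorial_mul_choose]; ring
    _ ≤ n ^ r := Nat.descFactorial_le_pow n r

lemma nat_rs_le_pow {r s : ℕ} (hr : 1 ≤ r) (hs : 2 ≤ s) :
    (r + 1) * s ≤ 2 ^ ((r + 1) * s ^ r) := by
  have h1 : (r+1) * s ≤ 2 ^ (r+1) * 2 ^ s :=
    Nat.mul_le_mul (Nat.lt_two_pow_self (n := r+1)).le (Nat.lt_two_pow_self (n := s)).le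
  have h2 : (r+1) + s ≤ (r+1) * s ^ r := by
    have hss : s ≤ s ^ r := Nat.le_self_pow (by omega) s
    have : (r+1) + s ≤ (r+1) * s := by nlinarith
    calc (r+1) + s ≤ (r+1) * s := this
      _ ≤ (r+1) * s ^ r := Nat.mul_le_mul_left _ hss
  calc (r+1) * s ≤ 2 ^ ((r+1) + s) := by rw [pow_add]; exact h1
    _ ≤ 2 ^ ((r+1) * s ^ r) := Nat.pow_le_pow_right (by omega) h2
set_option maxHeartbeats 1000000 in
lemma step {s r : ℕ} (n : ℕ) (hs : 2 ≤ s) (hr : 1 ≤ r)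
    (Flink : ∀ L : Finset (Finset (Fin n)), (∀ e ∈ L, e.card = r) → ¬ HasBox s r L →
      (L.card : ℝ) ≤ s * (n:ℝ) ^ ((r:ℝ) - 1/((r:ℝ) * (s:ℝ)^(r-1))))
    (H : Finset (Finset (Fin n))) (hu : ∀ e ∈ H, e.card = r + 1) (hb : ¬ HasBox s (r+1) H) :
    (H.card : ℝ) ≤ 2 * (n:ℝ) ^ (((r:ℝ)+1) - 1/(((r:ℝ)+1) * (s:ℝ)^r)) := by
  classical
  -- trivial case n = 0
  rcases Nat.eq_zero_or_pos n with rfl | hn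
  · have : H.card = 0 := by
      rcases Finset.eq_empty_or_nonempty H with rfl | ⟨e, he⟩
      · simp
      · exfalso
        have h1 := hu e he
        have h2 : e.card ≤ 0 := by
          have := Finset.card_le_card (Finset.subset_univ e)
          simpa using this
        omega
    simp only [this, Nat.cast_zero]
    positivity
  set nR : ℝ := (n : ℝ) with hnR
  have hn0 : (0:ℝ) < nR := by rw [hnR]; exact_mod_cast hn
  have hn1 : (1:ℝ) ≤ nR := by rw [hnR]; exact_mod_cast hn
  set sR : ℝ := (s : ℝ) with hsR
  have hs2 : (2:ℝ) ≤ sR := by rw [hsR]; exact_mod_cast hs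
  set er : ℝ := (r : ℝ) with her
  have hr1 : (1:ℝ) ≤ er := by rw [her]; exact_mod_cast hr
  have htR : (0:ℝ) < er + 1 := by linarith
  have hq : (0:ℝ) < sR ^ r := by positivity
  have hp : (0:ℝ) < sR ^ (r-1) := by positivity
  set δ : ℝ := 1/((er+1) * sR^r) with hδ
  have hδ0 : 0 < δ := by positivity
  set β : ℝ := 1/(er * sR^r) with hβ
  have hβ0 : 0 < β := by positivity
  have hδβ : δ < β := by
    rw [hδ, hβ]
    apply div_lt_div_of_pos_left one_pos (by positivity)
    nlinarith
  have hqsplit : sR ^ r = sR ^ (r-1) * sR := by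
    have h1 : r - 1 + 1 = r := by omega
    rw [← h1, pow_succ, h1]
  have hεβ : 1/(er * sR^(r-1)) = sR * β := by
    rw [hβ, hqsplit]
    field_simp
  have hδq : δ ≤ 1/4 := by
    rw [hδ]
    rw [div_le_div_iff₀ (by positivity) (by norm_num)]
    have h2q : (2:ℝ) ≤ sR ^ r := by
      calc (2:ℝ) = 2 ^ 1 := by norm_num
        _ ≤ sR ^ 1 := by simpa using hs2
        _ ≤ sR ^ r := pow_le_pow_right₀ (by linarith) hr
    nlinarith
  set X : ℝ := nR ^ ((er + 1) - δ) with hX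
  have hX0 : 0 < X := Real.rpow_pos_of_pos hn0 _
  show (H.card : ℝ) ≤ 2 * X
  rcases le_total (nR ^ δ) 4 with hsmall | hbig
  · -- small n : trivial bound
    have hHsub : H ⊆ powersetCard (r+1) (univ : Finset (Fin n)) := by
      intro e he
      rw [Finset.mem_powersetCard]
      exact ⟨Finset.subset_univ e, hu e he⟩
    have h1 : H.card ≤ n.choose (r+1) := by
      have := Finset.card_le_card hHsub
      rwa [Finset.card_powersetCard, Finset.card_univ, Fintype.card_fin] at this
    have h2 : 2 * n.choose (r+1) ≤ n ^ (r+1) := by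
      calc 2 * n.choose (r+1) ≤ (r+1).factorial * n.choose (r+1) := by
            apply Nat.mul_le_mul_right
            have : (2:ℕ).factorial ≤ (r+1).factorial := Nat.factorial_le (by omega)
            simpa [Nat.factorial] using this
        _ = n.descFactorial (r+1) := (Nat.descFactorial_eq_factorial_mul_choose _ _).symm
        _ ≤ n ^ (r+1) := Nat.descFactorial_le_pow _ _
    have h3 : (H.card : ℝ) ≤ (n:ℝ) ^ (r+1) / 2 := by
      have : (2:ℝ) * H.card ≤ (n:ℝ) ^ (r+1) := by exact_mod_cast le_trans (by omega) h2
      linarith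
    have h4 : (nR:ℝ) ^ (r+1) = X * nR ^ δ := by
      rw [hX, ← Real.rpow_add hn0]
      rw [← Real.rpow_natCast nR (r+1)]
      congr 1
      push_cast
      ring
    calc (H.card : ℝ) ≤ (n:ℝ) ^ (r+1) / 2 := h3
      _ = X * nR ^ δ / 2 := by rw [← h4]
      _ ≤ X * 4 / 2 := by
          apply div_le_div_of_nonneg_right _ (by norm_num)
          exact mul_le_mul_of_nonneg_left hsmall hX0.le
      _ = 2 * X := by ring
  · -- main case
    set N : ℕ := n.choose r with hN
    set K : ℕ := (r+1) * s ^ r with hK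
    have hKcast : (K:ℝ) = (er + 1) * sR ^ r := by rw [hK]; push_cast; ring
    -- nR ≥ 4 ^ K
    have hnK : (4:ℝ) ^ K ≤ nR := by
      have h1 : ((4:ℝ)) ^ K ≤ (nR ^ δ) ^ K := pow_le_pow_left₀ (by norm_num) hbig K
      have h2 : (nR ^ δ) ^ K = nR := by
        rw [← Real.rpow_natCast (nR ^ δ) K, ← Real.rpow_mul hn0.le]
        have : δ * K = 1 := by
          rw [hKcast, hδ]
          field_simp
        rw [this, Real.rpow_one]
      rwa [h2] at h1
    have h2K : (2:ℝ) ^ K ≤ nR ^ ((1:ℝ)/2) := by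
      have hsq : ((2:ℝ) ^ K) ^ 2 ≤ (nR ^ ((1:ℝ)/2)) ^ 2 := by
        have e1 : ((2:ℝ) ^ K) ^ 2 = 4 ^ K := by
          rw [← pow_mul, mul_comm, pow_mul]; norm_num
        have e2 : (nR ^ ((1:ℝ)/2)) ^ 2 = nR := by
          rw [← Real.rpow_natCast (nR ^ ((1:ℝ)/2)) 2, ← Real.rpow_mul hn0.le]
          norm_num
        rw [e1, e2]; exact hnK
      exact (pow_le_pow_iff_left₀ (by positivity) (by positivity) (by norm_num)).mp hsq
    -- fact (a): (er+1) * sR * N ≤ X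
    have hfa : (er + 1) * sR * (N:ℝ) ≤ X := by
      have h1 : ((r+1) * s : ℕ) ≤ 2 ^ K := nat_rs_le_pow hr hs
      have h2 : (er+1) * sR ≤ nR ^ (1 - δ) := by
        calc (er+1) * sR = (((r+1) * s : ℕ) : ℝ) := by push_cast; ring
          _ ≤ (2:ℝ) ^ K := by exact_mod_cast h1
          _ ≤ nR ^ ((1:ℝ)/2) := h2K
          _ ≤ nR ^ (1 - δ) := Real.rpow_le_rpow_of_exponent_le hn1 (by linarith)
      have h3 : (N:ℝ) ≤ nR ^ (r:ℕ) := by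
        have : N ≤ n ^ r := (Nat.choose_le_descFactorial n r).trans (Nat.descFactorial_le_pow n r)
        rw [hnR]; exact_mod_cast this
      calc (er+1) * sR * (N:ℝ) ≤ nR ^ (1-δ) * nR ^ (r:ℕ) := by
            apply mul_le_mul h2 h3 (Nat.cast_nonneg _) (by positivity)
        _ = X := by
            rw [← Real.rpow_natCast nR r, ← Real.rpow_add hn0, hX]
            congr 1
            push_cast
            ring
    -- the shared main argument, parameterized by the constant c
    have main : ∀ c : ℝ, 0 ≤ c →
        (sR * 2 ^ s ≤ c ^ s * 2 ^ ((r-1)*(s-1))) →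
        (c * nR ^ ((er + 1) - β) ≤ (2 - 2/(er+1)) * X) →
        (H.card : ℝ) ≤ 2 * X := by
      intro c hc hcoef hcb
      set F : ℝ := sR * nR ^ (er - 1/(er * sR^(r-1))) with hF
      have hF0 : 0 ≤ F := by positivity
      have hlink : ∀ S ∈ powersetCard s (univ : Finset (Fin n)), ((linkF H r S).card : ℝ) ≤ F := by
        intro S hS
        have hScard : S.card = s := (Finset.mem_powersetCard.mp hS).2
        have := Flink _ (linkF_unif H r S) (link_boxfree (by omega) H S hScard hb)
        rw [hF, hsR, her, hnR]
        exact this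
      set Y : ℝ := c * nR ^ ((er+1) - β) with hY
      have hY0 : 0 ≤ Y := by positivity
      have hYpow : Y ^ s = c ^ s * nR ^ (((er+1) - β) * s) := by
        rw [hY, mul_pow, ← Real.rpow_natCast (nR ^ ((er+1) - β)) s, ← Real.rpow_mul hn0.le]
      have hNpow : ((N:ℝ)) ^ (s-1) * 2 ^ ((r-1)*(s-1)) ≤ nR ^ ((r*(s-1) : ℕ)) := by
        have hnat : (N * 2 ^ (r-1)) ^ (s-1) ≤ (n ^ r) ^ (s-1) :=
          Nat.pow_le_pow_left nat_choose_two_pow _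
        have := hnat
        rw [mul_pow, ← pow_mul, ← pow_mul] at this
        rw [hnR]
        exact_mod_cast this
      have hYs : ((N : ℝ)) ^ (s - 1) * 2 ^ s * nR ^ s * F ≤ Y ^ s := by
        have h2rs : (0:ℝ) < 2 ^ ((r-1)*(s-1)) := by positivity
        rw [← mul_le_mul_iff_of_pos_right h2rs]
        have hE : nR ^ ((r*(s-1) : ℕ) : ℝ) * (nR ^ (s:ℕ) * nR ^ (er - 1/(er * sR^(r-1))))
            = nR ^ (((er+1) - β) * s) := by
          rw [← Real.rpow_natCast nR s, ← Real.rpow_add hn0, ← Real.rpow_add hn0, hεβ]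
          congr 1
          have hcast : ((r*(s-1) : ℕ) : ℝ) = er * (sR - 1) := by
            push_cast [Nat.cast_sub (by omega : 1 ≤ s)]
            rw [her, hsR]
          rw [hcast]
          ring
        calc ((N : ℝ)) ^ (s - 1) * 2 ^ s * nR ^ s * F * 2 ^ ((r-1)*(s-1))
            = (((N:ℝ)) ^ (s-1) * 2 ^ ((r-1)*(s-1))) * (2 ^ s * sR * (nR ^ s * nR ^ (er - 1/(er * sR^(r-1))))) := by
              rw [hF]; ring
          _ ≤ nR ^ ((r*(s-1) : ℕ)) * (2 ^ s * sR * (nR ^ s * nR ^ (er - 1/(er * sR^(r-1))))) := by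
              apply mul_le_mul_of_nonneg_right hNpow
              positivity
          _ = (sR * 2 ^ s) * (nR ^ ((r*(s-1) : ℕ) : ℝ) * (nR ^ (s:ℕ) * nR ^ (er - 1/(er * sR^(r-1))))) := by
              rw [Real.rpow_natCast nR (r*(s-1))]
              ring
          _ = (sR * 2 ^ s) * nR ^ (((er+1) - β) * s) := by rw [hE]
          _ ≤ (c ^ s * 2 ^ ((r-1)*(s-1))) * nR ^ (((er+1) - β) * s) := by
              apply mul_le_mul_of_nonneg_right hcoef
              positivity
          _ = Y ^ s * 2 ^ ((r-1)*(s-1)) := by rw [hYpow]; ring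
      have hsc := step_count (by omega : 1 ≤ s) H hu F hF0 hlink Y hY0 hYs
      have hterm1 : 2 * (s:ℝ) * ((n.choose r : ℕ):ℝ) ≤ (2/(er+1)) * X := by
        have h1 : (2/(er+1)) * ((er+1) * sR * (N:ℝ)) ≤ (2/(er+1)) * X :=
          mul_le_mul_of_nonneg_left hfa (by positivity)
        have h2 : (2/(er+1)) * ((er+1) * sR * (N:ℝ)) = 2 * sR * (N:ℝ) := by
          field_simp
        rw [← hsR]
        rw [h2] at h1
        exact_mod_cast h1
      calc (H.card : ℝ) ≤ 2 * s * (n.choose r) + Y := hsc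
        _ ≤ (2/(er+1)) * X + (2 - 2/(er+1)) * X := add_le_add hterm1 hcb
        _ = 2 * X := by ring
    -- now prove the hypotheses of `main`, splitting on r = 1 vs r ≥ 2
    rcases eq_or_lt_of_le hr with hre | hr2
    · -- r = 1
      subst hre
      apply main 3 (by norm_num)
      · have hnat : s * 2 ^ s ≤ 3 ^ s := nat_s2s3s hs
        have : (1-1) * (s-1) = 0 := by norm_num
        rw [this, pow_zero, mul_one, hsR]
        exact_mod_cast hnat
      · have hβδ : β = δ + δ := by
          rw [hβ, hδ]
          have her1 : er = 1 := by rw [her]; norm_num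
          rw [her1]
          rw [pow_one]
          ring
        have hsplitexp : (er + 1) - β = ((er + 1) - δ) + (-δ) := by rw [hβδ]; ring
        have h1 : nR ^ ((er + 1) - β) = X * (nR ^ δ)⁻¹ := by
          rw [hsplitexp, Real.rpow_add hn0, hX, Real.rpow_neg hn0.le]
        have h2 : (nR ^ δ)⁻¹ ≤ 4⁻¹ := by
          apply inv_anti₀ (by norm_num) hbig
        have her1 : er = 1 := by rw [her]; norm_num
        rw [h1, her1]
        norm_num
        nlinarith [hX0, Real.rpow_pos_of_pos hn0 δ]
    · -- r ≥ 2
      apply main 2 (by norm_num)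
      · have h1 : s ≤ 2 ^ (s-1) := nat_le_two_pow_pred (by omega)
        have h2 : (2:ℕ) ^ (s-1) ≤ 2 ^ ((r-1)*(s-1)) :=
          Nat.pow_le_pow_right (by omega) (Nat.le_mul_of_pos_left _ (by omega))
        have hnat : s * 2 ^ s ≤ 2 ^ ((r-1)*(s-1)) * 2 ^ s :=
          Nat.mul_le_mul_right _ (h1.trans h2)
        calc sR * 2 ^ s = ((s * 2 ^ s : ℕ) : ℝ) := by rw [hsR]; push_cast; ring
          _ ≤ (((2:ℕ) ^ ((r-1)*(s-1)) * 2 ^ s : ℕ) : ℝ) := by exact_mod_cast hnat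
          _ = 2 ^ s * 2 ^ ((r-1)*(s-1)) := by push_cast; ring
          _ = 2 ^ s * 2 ^ ((r-1)*(s-1)) := rfl
      · set γ : ℝ := β - δ with hγ
        have hγ0 : 0 < γ := by rw [hγ]; linarith
        have hγr : γ * er = δ := by
          rw [hγ, hβ, hδ]
          field_simp
          ring
        have hrne : er ≠ 0 := by linarith
        have hgpow : (nR ^ γ) ^ r = nR ^ δ := by
          rw [← Real.rpow_natCast (nR ^ γ) r, ← Real.rpow_mul hn0.le, ← her, mul_comm γ er,
            mul_comm er γ, hγr]
        have h4e : (1 + 1/er) ^ r ≤ 4 := by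
          have hx : 0 < 1/er := by positivity
          have h1 : 1 + 1/er ≤ Real.exp (1/er) := by
            have := Real.add_one_le_exp (1/er)
            linarith
          have h2 : (1 + 1/er) ^ r ≤ Real.exp (1/er) ^ r :=
            pow_le_pow_left₀ (by positivity) h1 r
          have h3 : Real.exp (1/er) ^ r = Real.exp 1 := by
            rw [← Real.exp_nat_mul, ← her]
            congr 1
            field_simp
          rw [h3] at h2
          have h4 : Real.exp 1 ≤ 4 := by
            have := Real.exp_one_lt_d9
            linarith
          linarith
        have hkey : 1 + 1/er ≤ nR ^ γ := by
          have hcmp : (1 + 1/er) ^ r ≤ (nR ^ γ) ^ r := by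
            rw [hgpow]
            exact h4e.trans hbig
          exact (pow_le_pow_iff_left₀ (by positivity) (by positivity) (by omega)).mp hcmp
        have hsplitexp : (er + 1) - β = ((er + 1) - δ) + (-γ) := by rw [hγ]; ring
        have h1 : nR ^ ((er + 1) - β) = X * (nR ^ γ)⁻¹ := by
          rw [hsplitexp, Real.rpow_add hn0, hX, Real.rpow_neg hn0.le]
        rw [h1]
        have hgp : 0 < nR ^ γ := Real.rpow_pos_of_pos hn0 γ
        have hinv : (nR ^ γ)⁻¹ ≤ er / (er + 1) := by
          rw [inv_le_iff_one_le_mul₀ hgp]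
          calc (1:ℝ) = (er / (er+1)) * ((er+1)/er) := by field_simp
            _ ≤ (er / (er+1)) * (nR ^ γ) := by
                apply mul_le_mul_of_nonneg_left _ (by positivity)
                have : (er+1)/er = 1 + 1/er := by field_simp
                rw [this]
                exact hkey
            _ = er / (er+1) * nR ^ γ := rfl
        calc 2 * (X * (nR ^ γ)⁻¹) ≤ 2 * (X * (er/(er+1))) := by
              apply mul_le_mul_of_nonneg_left _ (by norm_num)
              exact mul_le_mul_of_nonneg_left hinv hX0.le
          _ = (2 - 2/(er+1)) * X := by field_simp; ring
lemma main_induct {s : ℕ} (hs : 2 ≤ s) : ∀ t : ℕ, 2 ≤ t → ∀ (n : ℕ)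
    (H : Finset (Finset (Fin n))), (∀ e ∈ H, e.card = t) → ¬ HasBox s t H →
    (H.card : ℝ) ≤ 2 * (n:ℝ) ^ ((t:ℝ) - 1/((t:ℝ) * (s:ℝ)^(t-1))) := by
  intro t ht
  induction t, ht using Nat.le_induction with
  | base =>
    intro n H hu hb
    have hF : ∀ L : Finset (Finset (Fin n)), (∀ e ∈ L, e.card = 1) → ¬ HasBox s 1 L →
        (L.card : ℝ) ≤ s * (n:ℝ) ^ (((1:ℕ):ℝ) - 1/(((1:ℕ):ℝ) * (s:ℝ)^(1-1))) := by
      intro L hL hbL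
      have h0 : ((1:ℕ):ℝ) - 1/(((1:ℕ):ℝ) * (s:ℝ)^(1-1)) = 0 := by norm_num
      rw [h0, Real.rpow_zero, mul_one]
      exact_mod_cast level1 L hL hbL
    have := step (s := s) (r := 1) n hs le_rfl (by exact_mod_cast hF) H
      (by exact_mod_cast hu) (by exact_mod_cast hb)
    have hexp : (((1:ℕ):ℝ)+1) - 1/((((1:ℕ):ℝ)+1) * (s:ℝ)^1) = ((2:ℕ):ℝ) - 1/(((2:ℕ):ℝ) * (s:ℝ)^(2-1)) := by
      norm_num
    rw [← hexp]
    exact_mod_cast this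
  | succ t ht ih =>
    intro n H hu hb
    have hF : ∀ L : Finset (Finset (Fin n)), (∀ e ∈ L, e.card = t) → ¬ HasBox s t L →
        (L.card : ℝ) ≤ s * (n:ℝ) ^ ((t:ℝ) - 1/((t:ℝ) * (s:ℝ)^(t-1))) := by
      intro L hL hbL
      refine (ih n L hL hbL).trans ?_
      apply mul_le_mul_of_nonneg_right _ (Real.rpow_nonneg (Nat.cast_nonneg _) _)
      exact_mod_cast hs
    have := step (s := s) (r := t) n hs (by omega) hF H hu hb
    have hexp : ((t:ℝ)+1) - 1/(((t:ℝ)+1) * (s:ℝ)^t) = (((t+1:ℕ)):ℝ) - 1/((((t+1:ℕ)):ℝ) * (s:ℝ)^(t+1-1)) := by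
      push_cast
      norm_num
    rw [← hexp]
    exact this
theorem stmt4 {t s n : ℕ} (ht : 2 ≤ t) (hs : 1 ≤ s)
    (H : Finset (Finset (Fin n))) (hunif : ∀ e ∈ H, e.card = t)
    (hH : ¬ ∃ V : Fin t → Finset (Fin n),
      (∀ i, (V i).card = s) ∧
      (∀ i j : Fin t, i ≠ j → Disjoint (V i) (V j)) ∧
      (∀ i j : Fin t, i < j → ∀ x ∈ V i, ∀ y ∈ V j, x < y) ∧
      (∀ v : Fin t → Fin n, (∀ i, v i ∈ V i) → Finset.image v Finset.univ ∈ H)) :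
    (H.card : ℝ) ≤ 2 * (n : ℝ) ^ ((t : ℝ) - 1 / ((t : ℝ) * (s : ℝ) ^ (t - 1))) := by
  rcases eq_or_lt_of_le hs with hs1 | hs2
  · -- s = 1 : H must be empty
    have hemp : H = ∅ := by
      by_contra hne
      obtain ⟨e, he⟩ := Finset.nonempty_iff_ne_empty.mpr hne
      set a : Fin t → Fin n := fun i => ((e.orderIsoOfFin (hunif e he)) i : Fin n) with ha
      have hainj : Function.Injective a := by
        intro i j hij
        have := Subtype.coe_injective hij
        exact (e.orderIsoOfFin (hunif e he)).injective this
      have haim : Finset.image a Finset.univ = e := by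
        apply Finset.eq_of_subset_of_card_le
        · intro x hx
          obtain ⟨i, _, rfl⟩ := Finset.mem_image.mp hx
          exact ((e.orderIsoOfFin (hunif e he)) i).2
        · rw [Finset.card_image_of_injective _ hainj, Finset.card_univ, Fintype.card_fin,
            hunif e he]
      apply hH
      refine ⟨fun i => {a i}, fun i => by simp [← hs1], ?_, ?_, ?_⟩
      · intro i j hij
        simp only [Finset.disjoint_singleton]
        exact fun h => hij (hainj h)
      · intro i j hij x hx y hy
        rw [Finset.mem_singleton] at hx hy
        subst hx; subst hy
        have : (e.orderIsoOfFin (hunif e he)) i < (e.orderIsoOfFin (hunif e he)) j :=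
          (e.orderIsoOfFin (hunif e he)).strictMono hij
        exact this
      · intro v hv
        have : v = a := by
          funext i
          have := hv i
          rwa [Finset.mem_singleton] at this
        rw [this, haim]
        exact he
    rw [hemp]
    simp only [Finset.card_empty, Nat.cast_zero]
    positivity
  · exact main_induct hs2 t ht n H hunif hH
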